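/- arXiv:2302.13319 — 3 statements merged into one kernel-verified Lean document; each statement's English description precedes it below -/
import Mathlib

section
/- Let the joint law of (x, z) on ℝ^d × {0,1} be the mixture p·(N(μ_1, Σ) ⊗ δ_1) + (1−p)·(N(μ_0, Σ) ⊗ δ_0) for some p ∈ [0,1], means μ_0, μ_1 ∈ ℝ^d and a shared symmetric positive semidefinite covariance matrix Σ ∈ ℝ^{d×d}. If U ∈ ℝ^{d×k} satisfies Uᵀμ_0 = Uᵀμ_1, then the random variables Uᵀx and z are independent; consequently, for every measurable function h: ℝ^k → ℝ, h(Uᵀx) and z are independent. -/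
open Matrix MeasureTheory ProbabilityTheory
open scoped ENNReal

/-- The positive semidefinite square root, as `Matrix.PosSemidef.sqrt` was defined in the older Mathlib. -/
noncomputable def Matrix.PosSemidef.sqrt {n : Type*} [Fintype n] [DecidableEq n]
    {A : Matrix n n ℝ} (hA : A.PosSemidef) : Matrix n n ℝ :=
  hA.1.eigenvectorUnitary.1 * diagonal ((↑) ∘ (√·) ∘ hA.1.eigenvalues) *
    (star hA.1.eigenvectorUnitary : Matrix n n ℝ)

/-- The multivariate Gaussian measure `N(μ, Σ)` on `ℝ^d`, defined as the pushforward of a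
product of `d` independent standard Gaussians under the affine map `x ↦ μ + √Σ · x`,
where `√Σ` is the positive semidefinite square root of the (symmetric positive semidefinite)
covariance matrix `Σ`. -/
noncomputable def multivariateGaussian {d : ℕ} (μ : Fin d → ℝ)
    {S : Matrix (Fin d) (Fin d) ℝ} (hS : S.PosSemidef) : Measure (Fin d → ℝ) :=
  (Measure.pi fun _ : Fin d => gaussianReal 0 1).map fun x => μ + hS.sqrt *ᵥ x

lemma measurable_mulVec' {d k : ℕ} (M : Matrix (Fin k) (Fin d) ℝ) :
    Measurable (fun x : Fin d → ℝ => M *ᵥ x) := by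
  have : Continuous (fun x : Fin d → ℝ => M.mulVecLin x) :=
    M.mulVecLin.continuous_of_finiteDimensional
  simpa [Matrix.mulVecLin_apply] using this.measurable

lemma mvg_isProb {d : ℕ} (μ : Fin d → ℝ) {S : Matrix (Fin d) (Fin d) ℝ}
    (hS : S.PosSemidef) : IsProbabilityMeasure (multivariateGaussian μ hS) := by
  unfold _root_.multivariateGaussian
  exact Measure.isProbabilityMeasure_map
    ((measurable_const.add (measurable_mulVec' hS.sqrt)).aemeasurable)

lemma mvg_map_eq {d k : ℕ} (μ₀ μ₁ : Fin d → ℝ) {S : Matrix (Fin d) (Fin d) ℝ}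
    (hS : S.PosSemidef) (U : Matrix (Fin d) (Fin k) ℝ) (hU : Uᵀ *ᵥ μ₀ = Uᵀ *ᵥ μ₁) :
    (multivariateGaussian μ₀ hS).map (fun x => Uᵀ *ᵥ x)
      = (multivariateGaussian μ₁ hS).map (fun x => Uᵀ *ᵥ x) := by
  unfold _root_.multivariateGaussian
  rw [Measure.map_map (measurable_mulVec' Uᵀ)
    (by exact measurable_const.add (measurable_mulVec' hS.sqrt)),
    Measure.map_map (measurable_mulVec' Uᵀ)
    (by exact measurable_const.add (measurable_mulVec' hS.sqrt))]
  congr 1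
  funext x
  simp [Function.comp, Matrix.mulVec_add, hU]

/-- Proposition 1: Let the joint law of `(x, z)` on `ℝ^d × {0,1}` be the mixture
`p·(N(μ₁, Σ) ⊗ δ₁) + (1−p)·(N(μ₀, Σ) ⊗ δ₀)` with shared symmetric positive semidefinite
covariance `Σ`. If `Uᵀμ₀ = Uᵀμ₁`, then `Uᵀx` and `z` are independent, and consequently
`h(Uᵀx)` and `z` are independent for every measurable `h : ℝ^k → ℝ`. -/
theorem indepFun_of_proj_means_eq {d k : ℕ} (μ₀ μ₁ : Fin d → ℝ)
    {S : Matrix (Fin d) (Fin d) ℝ} (hS : S.PosSemidef)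
    (p : ℝ≥0∞) (hp : p ≤ 1)
    (U : Matrix (Fin d) (Fin k) ℝ) (hU : Uᵀ *ᵥ μ₀ = Uᵀ *ᵥ μ₁) :
    IndepFun (fun ω : (Fin d → ℝ) × Fin 2 => Uᵀ *ᵥ ω.1) Prod.snd
        (p • (multivariateGaussian μ₁ hS).prod (Measure.dirac (1 : Fin 2)) +
          (1 - p) • (multivariateGaussian μ₀ hS).prod (Measure.dirac (0 : Fin 2))) ∧
      ∀ h : (Fin k → ℝ) → ℝ, Measurable h →
        IndepFun (fun ω : (Fin d → ℝ) × Fin 2 => h (Uᵀ *ᵥ ω.1)) Prod.snd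
          (p • (multivariateGaussian μ₁ hS).prod (Measure.dirac (1 : Fin 2)) +
            (1 - p) • (multivariateGaussian μ₀ hS).prod (Measure.dirac (0 : Fin 2))) := by
  have hG₀ := mvg_isProb μ₀ hS
  have hG₁ := mvg_isProb μ₁ hS
  have hkey : IndepFun (fun ω : (Fin d → ℝ) × Fin 2 => Uᵀ *ᵥ ω.1) Prod.snd
      (p • (multivariateGaussian μ₁ hS).prod (Measure.dirac (1 : Fin 2)) +
        (1 - p) • (multivariateGaussian μ₀ hS).prod (Measure.dirac (0 : Fin 2))) := by
    rw [indepFun_iff_measure_inter_preimage_eq_mul]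
    intro s t hs ht
    have hmeas : Measurable (fun x : Fin d → ℝ => Uᵀ *ᵥ x) := measurable_mulVec' Uᵀ
    set A : Set (Fin d → ℝ) := (fun x => Uᵀ *ᵥ x) ⁻¹' s with hA
    have hAm : MeasurableSet A := hmeas hs
    have hpre : (fun ω : (Fin d → ℝ) × Fin 2 => Uᵀ *ᵥ ω.1) ⁻¹' s ∩ Prod.snd ⁻¹' t
        = A ×ˢ t := by
      ext ω; simp [hA, Set.mem_prod, and_comm]
    have hpre1 : (fun ω : (Fin d → ℝ) × Fin 2 => Uᵀ *ᵥ ω.1) ⁻¹' s = A ×ˢ (Set.univ : Set (Fin 2)) := by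
      ext ω; simp [hA]
    have hpre2 : (Prod.snd : (Fin d → ℝ) × Fin 2 → Fin 2) ⁻¹' t
        = (Set.univ : Set (Fin d → ℝ)) ×ˢ t := by
      ext ω; simp
    have hAeq : (multivariateGaussian μ₀ hS) A = (multivariateGaussian μ₁ hS) A := by
      have h0 := Measure.map_apply hmeas hs (μ := multivariateGaussian μ₀ hS)
      have h1 := Measure.map_apply hmeas hs (μ := multivariateGaussian μ₁ hS)
      rw [← h0, ← h1, mvg_map_eq μ₀ μ₁ hS U hU]
    simp only [hpre, hpre1, hpre2, Set.prod_inter_prod, Set.inter_univ, Set.univ_inter,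
      Measure.add_apply, Measure.smul_apply, smul_eq_mul,
      Measure.prod_prod, measure_univ, mul_one, one_mul, ← hAeq]
    generalize (multivariateGaussian μ₀ hS) A = m
    have hcol : p * m + (1 - p) * m = m := by
      rw [← add_mul, add_tsub_cancel_of_le hp, one_mul]
    rw [hcol]
    ring
  refine ⟨hkey, fun h hh => ?_⟩
  have := hkey.comp hh measurable_id
  simpa [Function.comp_def] using this
end

section
/- Let n' ≥ 3 and consider the dataset of 2n' points in ℝ² given by x_1 = … = x_{n'} = 0 with labels z_1 = … = z_{n'} = 0, and x_{n'+j} = (cos(2πj/n'), sin(2πj/n')) for j = 1,…,n' with labels z_{n'+1} = … = z_{2n'} = 1. Then for every nonzero vector u ∈ ℝ², at most 2 of the indices j ∈ {1,…,n'} satisfy uᵀx_{n'+j} = 0, and consequently the function h: ℝ → ℝ with h(t) = 1 if t ≠ 0 and h(t) = 0 if t = 0 satisfies h(uᵀx_i) = z_i for at least 2n' − 2 of the 2n' indices i. -/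
open Matrix

/-- For `n' ≥ 3`, consider the `2n'` points in `ℝ²` with `x i = 0` and `z i = 0`
for `i ∈ {1,…,n'}`, and `x (n'+j) = (cos(2πj/n'), sin(2πj/n'))` with `z (n'+j) = 1` for
`j ∈ {1,…,n'}`. Then for every nonzero `u ∈ ℝ²`, at most `2` indices `j ∈ {1,…,n'}` satisfy
`uᵀ x (n'+j) = 0`, and consequently the function `h(t) = 1[t ≠ 0]` satisfies
`h(uᵀ x i) = z i` for at least `2n' − 2` of the `2n'` indices `i`. -/
theorem strict_fair_pca_infeasible (n' : ℕ) (hn : 3 ≤ n')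
    (x : ℕ → Fin 2 → ℝ)
    (hx0 : ∀ i, 1 ≤ i → i ≤ n' → x i = 0)
    (hx1 : ∀ j, 1 ≤ j → j ≤ n' →
      x (n' + j) = ![Real.cos (2 * Real.pi * j / n'), Real.sin (2 * Real.pi * j / n')])
    (z : ℕ → ℝ)
    (hz0 : ∀ i, 1 ≤ i → i ≤ n' → z i = 0)
    (hz1 : ∀ i, n' + 1 ≤ i → i ≤ 2 * n' → z i = 1)
    (h : ℝ → ℝ) (hh : ∀ t : ℝ, h t = if t = 0 then 0 else 1) :
    ∀ u : Fin 2 → ℝ, u ≠ 0 →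
      ((Finset.Icc 1 n').filter fun j => u ⬝ᵥ x (n' + j) = 0).card ≤ 2 ∧
      2 * n' - 2 ≤ ((Finset.Icc 1 (2 * n')).filter fun i => h (u ⬝ᵥ x i) = z i).card := by
  intro u hu
  have hn'0 : (n' : ℝ) ≠ 0 := by
    have : 0 < n' := by omega
    exact_mod_cast this.ne'
  set c : ℕ → ℝ := fun j => Real.cos (2 * Real.pi * j / n') with hc
  set s : ℕ → ℝ := fun j => Real.sin (2 * Real.pi * j / n') with hs
  -- injectivity of the angle map on [1, n']
  have key : ∀ i ∈ Finset.Icc 1 n', ∀ j ∈ Finset.Icc 1 n',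
      c i = c j → s i = s j → i = j := by
    intro i hi j hj hci hsi
    simp only [Finset.mem_Icc] at hi hj
    have hexp : Complex.exp ((2 * Real.pi * i / n' : ℝ) * Complex.I)
        = Complex.exp ((2 * Real.pi * j / n' : ℝ) * Complex.I) := by
      apply Complex.ext
      · rw [Complex.exp_ofReal_mul_I_re, Complex.exp_ofReal_mul_I_re]; exact hci
      · rw [Complex.exp_ofReal_mul_I_im, Complex.exp_ofReal_mul_I_im]; exact hsi
    rw [Complex.exp_eq_exp_iff_exists_int] at hexp
    obtain ⟨k, hk⟩ := hexp
    have him := congrArg Complex.im hk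
    simp [Complex.add_im, Complex.mul_im, Complex.ofReal_im, Complex.ofReal_re] at him
    -- him : 2π i / n' = 2π j / n' + k * 2π
    have hij : (i : ℝ) = j + k * n' := by
      field_simp at him
      have hπ : Real.pi ≠ 0 := Real.pi_ne_zero
      nlinarith [him, Real.pi_pos]
    have hijZ : (i : ℤ) = j + k * n' := by exact_mod_cast hij
    have hk0 : k = 0 := by
      rcases lt_trichotomy k 0 with hlt | heq | hgt
      · have : k ≤ -1 := by omega
        nlinarith [hi.1, hi.2, hj.1, hj.2, this]
      · exact heq
      · have : 1 ≤ k := by omega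
        nlinarith [hi.1, hi.2, hj.1, hj.2, this]
    rw [hk0] at hijZ
    simp at hijZ
    omega
  -- S : the set of j with u ⬝ᵥ x (n'+j) = 0
  set S := (Finset.Icc 1 n').filter (fun j => u ⬝ᵥ x (n' + j) = 0) with hS
  set N : ℝ := u 0 ^ 2 + u 1 ^ 2 with hNdef
  have hNpos : 0 < N := by
    have : u 0 ≠ 0 ∨ u 1 ≠ 0 := by
      by_contra hcon
      push_neg at hcon
      apply hu
      funext i
      fin_cases i <;> simp [hcon.1, hcon.2]
    rcases this with h0 | h1 <;> positivity
  set T : ℕ → ℝ := fun j => u 0 * s j - u 1 * c j with hT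
  have hdot : ∀ j ∈ S, u 0 * c j + u 1 * s j = 0 := by
    intro j hj
    simp only [hS, Finset.mem_filter, Finset.mem_Icc] at hj
    have := hj.2
    rw [hx1 j hj.1.1 hj.1.2] at this
    simpa [dotProduct, Fin.sum_univ_two, hc, hs] using this
  have hpyth : ∀ j : ℕ, c j ^ 2 + s j ^ 2 = 1 := by
    intro j
    simp only [hc, hs]
    exact Real.cos_sq_add_sin_sq _
  have hcs : ∀ j ∈ S, c j = -(u 1) * T j / N ∧ s j = u 0 * T j / N := by
    intro j hj
    have e0 := hdot j hj
    constructor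
    · field_simp
      linear_combination (u 0) * e0
    · field_simp
      linear_combination (u 1) * e0
  have hT2 : ∀ j ∈ S, T j ^ 2 = N := by
    intro j hj
    have e0 := hdot j hj
    have p := hpyth j
    linear_combination (-(u 0 * c j + u 1 * s j)) * e0 + N * p
  set a : ℝ := Real.sqrt N with ha
  have ha2 : a ^ 2 = N := Real.sq_sqrt hNpos.le
  have hmem : ∀ j ∈ S, T j ∈ ({a, -a} : Finset ℝ) := by
    intro j hj
    have : (T j - a) * (T j + a) = 0 := by
      linear_combination hT2 j hj - ha2
    rcases mul_eq_zero.mp this with h' | h'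
    · simp [Finset.mem_insert]
      left; linarith
    · simp [Finset.mem_insert]
      right; linarith
  have hinj : ∀ i ∈ S, ∀ j ∈ S, T i = T j → i = j := by
    intro i hi j hj hTij
    have hci := (hcs i hi).1
    have hsi := (hcs i hi).2
    have hcj := (hcs j hj).1
    have hsj := (hcs j hj).2
    have hiI : i ∈ Finset.Icc 1 n' := (Finset.mem_filter.mp hi).1
    have hjI : j ∈ Finset.Icc 1 n' := (Finset.mem_filter.mp hj).1
    exact key i hiI j hjI (by rw [hci, hcj, hTij]) (by rw [hsi, hsj, hTij])
  have hcardS : S.card ≤ 2 := by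
    have := Finset.card_le_card_of_injOn T hmem hinj
    calc S.card ≤ ({a, -a} : Finset ℝ).card := this
      _ ≤ 2 := by
        refine le_trans (Finset.card_insert_le _ _) ?_
        simp
  refine ⟨hcardS, ?_⟩
  -- second part
  set B := (Finset.Icc 1 (2 * n')).filter (fun i => ¬ h (u ⬝ᵥ x i) = z i) with hB
  have hsplit : ((Finset.Icc 1 (2 * n')).filter fun i => h (u ⬝ᵥ x i) = z i).card + B.card
      = 2 * n' := by
    rw [hB, Finset.card_filter_add_card_filter_not]
    simp [Nat.card_Icc]
  have hBsub : B ⊆ S.image (fun j => n' + j) := by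
    intro i hi
    simp only [hB, Finset.mem_filter, Finset.mem_Icc] at hi
    obtain ⟨⟨hi1, hi2⟩, hbad⟩ := hi
    by_cases hle : i ≤ n'
    · exfalso
      apply hbad
      rw [hx0 i hi1 hle, hz0 i hi1 hle]
      simp [hh]
    · push_neg at hle
      have hzi : z i = 1 := hz1 i (by omega) hi2
      have hdz : u ⬝ᵥ x i = 0 := by
        by_contra hne
        apply hbad
        rw [hh, if_neg hne, hzi]
      simp only [Finset.mem_image]
      refine ⟨i - n', ?_, by omega⟩
      simp only [hS, Finset.mem_filter, Finset.mem_Icc]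
      refine ⟨⟨by omega, by omega⟩, ?_⟩
      have : n' + (i - n') = i := by omega
      rw [this]
      exact hdz
  have hBcard : B.card ≤ 2 := by
    calc B.card ≤ (S.image (fun j => n' + j)).card := Finset.card_le_card hBsub
      _ ≤ S.card := Finset.card_image_le
      _ ≤ 2 := hcardS
  omega
end

section
/- Let Z ∈ ℝ^{n×m} be the centered one-hot group-membership matrix for a partition of n datapoints into m disjoint nonempty groups G_1,…,G_m, and let X ∈ ℝ^{d×n} be the data matrix. Then for every U ∈ ℝ^{d×k}, the condition ZᵀXᵀU = 0 is equivalent to each of the following: (i) for every l ∈ {1,…,m}, (1/|G_l|)∑_{i∈G_l} Uᵀx_i = (1/(n−|G_l|))∑_{i∉G_l} Uᵀx_i; (ii) the group-conditional means of the projected data coincide for all groups, i.e., (1/|G_l|)∑_{i∈G_l} Uᵀx_i = (1/|G_{l'}|)∑_{i∈G_{l'}} Uᵀx_i for all l, l' ∈ {1,…,m}. -/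
open Matrix

/-- With `Z ∈ ℝ^{n×m}` the centered one-hot group-membership matrix of a
partition into `m ≥ 2` disjoint nonempty groups `G_1, …, G_m` and `X ∈ ℝ^{d×n}` the data
matrix, for every `U ∈ ℝ^{d×k}` the condition `ZᵀXᵀU = 0` is equivalent to each of:
(i) for every group `l`, the mean of the projected points in `G_l` equals the mean of the
projected points outside `G_l`; (ii) the group-conditional means of the projected data
coincide for all pairs of groups. -/
theorem multi_group_means_iff (d n m k : ℕ) (hm : 2 ≤ m) (g : Fin n → Fin m)
    (hg : Function.Surjective g)
    (X : Matrix (Fin d) (Fin n) ℝ) (Z : Matrix (Fin n) (Fin m) ℝ)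
    (hZ : ∀ i l, Z i l =
      (if g i = l then 1 else 0) - (∑ j, if g j = l then (1 : ℝ) else 0) / n)
    (U : Matrix (Fin d) (Fin k) ℝ) :
    (Zᵀ * Xᵀ * U = 0 ↔
      ∀ l : Fin m,
        (1 / ((Finset.univ.filter fun i => g i = l).card : ℝ)) •
            ∑ i ∈ Finset.univ.filter fun i => g i = l, Uᵀ *ᵥ (fun r => X r i) =
          (1 / ((n : ℝ) - ((Finset.univ.filter fun i => g i = l).card : ℝ))) •
            ∑ i ∈ Finset.univ.filter fun i => g i ≠ l, Uᵀ *ᵥ (fun r => X r i)) ∧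
    (Zᵀ * Xᵀ * U = 0 ↔
      ∀ l l' : Fin m,
        (1 / ((Finset.univ.filter fun i => g i = l).card : ℝ)) •
            ∑ i ∈ Finset.univ.filter fun i => g i = l, Uᵀ *ᵥ (fun r => X r i) =
          (1 / ((Finset.univ.filter fun i => g i = l').card : ℝ)) •
            ∑ i ∈ Finset.univ.filter fun i => g i = l', Uᵀ *ᵥ (fun r => X r i)) := by
  classical
  -- cardinalities
  set c : Fin m → ℕ := fun l => (Finset.univ.filter fun i => g i = l).card with hc
  have hcpos : ∀ l, 0 < c l := by
    intro l
    obtain ⟨i, hi⟩ := hg l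
    exact Finset.card_pos.mpr ⟨i, by simp [hi]⟩
  have hcsum : ∑ l, c l = n := by
    have := Finset.card_eq_sum_card_fiberwise
      (s := (Finset.univ : Finset (Fin n))) (t := (Finset.univ : Finset (Fin m)))
      (f := g) (fun x _ => Finset.mem_univ _)
    simpa using this.symm
  have hclt : ∀ l, c l < n := by
    intro l
    obtain ⟨l', hl'⟩ := Fintype.exists_ne_of_one_lt_card (by rw [Fintype.card_fin]; omega) l
    have h2 : c l + c l' ≤ ∑ l'', c l'' := by
      have := Finset.sum_le_sum_of_subset
        (f := fun l'' => c l'') (Finset.subset_univ {l, l'})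
      simpa [Finset.sum_pair (Ne.symm hl')] using this
    have := hcpos l'
    omega
  have hnpos : 0 < n := by have := hclt ⟨0, by omega⟩; omega
  have hne : (n : ℝ) ≠ 0 := Nat.cast_ne_zero.mpr hnpos.ne'
  have hc0 : ∀ l, ((c l : ℝ)) ≠ 0 := fun l => Nat.cast_ne_zero.mpr (hcpos l).ne'
  have hnc : ∀ l, ((n : ℝ) - (c l : ℝ)) ≠ 0 := by
    intro l
    have : ((c l : ℝ)) < n := by exact_mod_cast hclt l
    exact sub_ne_zero.mpr this.ne'
  have hfold : ∀ l : Fin m,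
      (((Finset.univ.filter fun i => g i = l).card : ℕ) : ℝ) = ((c l : ℕ) : ℝ) :=
    fun l => rfl
  -- projected sums
  set S : Fin m → Fin k → ℝ :=
    fun l j => ∑ i ∈ Finset.univ.filter fun i => g i = l, ∑ r, X r i * U r j with hS
  set T : Fin k → ℝ := fun j => ∑ i, ∑ r, X r i * U r j with hT
  have hvec0 : ∀ (s : Finset (Fin n)) (j : Fin k),
      (∑ i ∈ s, Uᵀ *ᵥ fun r => X r i) j = ∑ i ∈ s, ∑ r, X r i * U r j := by
    intro s j
    rw [Finset.sum_apply]
    exact Finset.sum_congr rfl fun i _ => by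
      simp [Matrix.mulVec, dotProduct, Matrix.transpose_apply, mul_comm]
  have hvecS : ∀ l j,
      (∑ i ∈ Finset.univ.filter fun i => g i = l, Uᵀ *ᵥ fun r => X r i) j = S l j := by
    intro l j; rw [hvec0]
  have hST : ∀ j, ∑ l, S l j = T j := by
    intro j
    simp only [hS, hT]
    exact Finset.sum_fiberwise _ _ _
  have hvecC : ∀ l j,
      (∑ i ∈ Finset.univ.filter fun i => g i ≠ l, Uᵀ *ᵥ fun r => X r i) j
        = T j - S l j := by
    intro l j
    rw [hvec0]
    have h := Finset.sum_filter_add_sum_filter_not (Finset.univ : Finset (Fin n))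
      (fun i => g i = l) (fun i => ∑ r, X r i * U r j)
    simp only [hS, hT]
    linarith [h]
  -- entries of the matrix product
  have hentry : ∀ l j, (Zᵀ * Xᵀ * U) l j = S l j - (c l : ℝ) / n * T j := by
    intro l j
    have hcard : (∑ jj, if g jj = l then (1 : ℝ) else 0) = (c l : ℝ) := by
      rw [Finset.sum_boole]
    rw [Matrix.mul_assoc]
    simp only [Matrix.mul_apply, Matrix.transpose_apply, hS, hT]
    calc ∑ i, Z i l * ∑ r, X r i * U r j
        = ∑ i, ((if g i = l then (1 : ℝ) else 0) * ∑ r, X r i * U r j)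
          - ∑ i, ((c l : ℝ) / n) * ∑ r, X r i * U r j := by
          rw [← Finset.sum_sub_distrib]
          exact Finset.sum_congr rfl fun i _ => by rw [hZ, hcard, sub_mul]
      _ = _ := by
          rw [← Finset.mul_sum]
          congr 1
          rw [Finset.sum_filter]
          exact Finset.sum_congr rfl fun i _ => by by_cases h : g i = l <;> simp [h]
  have hcore : Zᵀ * Xᵀ * U = 0 ↔ ∀ l j, (n : ℝ) * S l j = (c l : ℝ) * T j := by
    rw [← Matrix.ext_iff]
    refine forall_congr' fun l => forall_congr' fun j => ?_
    rw [hentry, Matrix.zero_apply, sub_eq_zero, div_mul_eq_mul_div, eq_div_iff hne]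
    constructor <;> intro hh <;> linear_combination hh
  refine ⟨hcore.trans ?_, hcore.trans ?_⟩
  · constructor
    · intro h l
      funext j
      simp only [Pi.smul_apply, smul_eq_mul, hvecS, hvecC, hfold]
      rw [one_div, one_div, inv_mul_eq_div, inv_mul_eq_div,
        div_eq_div_iff (hc0 l) (hnc l)]
      linear_combination h l j
    · intro h l j
      have h1 := congrFun (h l) j
      simp only [Pi.smul_apply, smul_eq_mul, hvecS, hvecC, hfold] at h1
      rw [one_div, one_div, inv_mul_eq_div, inv_mul_eq_div,
        div_eq_div_iff (hc0 l) (hnc l)] at h1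
      linear_combination h1
  · constructor
    · intro h l l'
      funext j
      simp only [Pi.smul_apply, smul_eq_mul, hvecS, hfold]
      rw [one_div, one_div, inv_mul_eq_div, inv_mul_eq_div,
        div_eq_div_iff (hc0 l) (hc0 l')]
      have key : S l j * (c l' : ℝ) * n = S l' j * (c l : ℝ) * n := by
        linear_combination ((c l' : ℝ)) * h l j - ((c l : ℝ)) * h l' j
      exact mul_right_cancel₀ hne key
    · intro h l j
      have key : ∀ l', (c l : ℝ) * S l' j = (c l' : ℝ) * S l j := by
        intro l'
        have h1 := congrFun (h l' l) j
        simp only [Pi.smul_apply, smul_eq_mul, hvecS, hfold] at h1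
        rw [one_div, one_div, inv_mul_eq_div, inv_mul_eq_div,
          div_eq_div_iff (hc0 l') (hc0 l)] at h1
        linear_combination h1
      have hsum : (c l : ℝ) * T j = (n : ℝ) * S l j := by
        calc (c l : ℝ) * T j = ∑ l', (c l : ℝ) * S l' j := by
              rw [← Finset.mul_sum, hST]
          _ = ∑ l', (c l' : ℝ) * S l j := Finset.sum_congr rfl fun l' _ => key l'
          _ = (∑ l', (c l' : ℝ)) * S l j := by rw [Finset.sum_mul]
          _ = (n : ℝ) * S l j := by
              congr 1
              exact_mod_cast hcsum
      linarith [hsum]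
end
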